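/- Let P be a finite simplicial complex in ℝ^N. Then there exists K < ∞ such that: whenever ρ, τ ∈ P satisfy ρ ∩ τ ≠ ∅ but neither is a subset of the other, and x ∈ Int ρ, y ∈ Int τ, there exist points x̃, ỹ ∈ Int(ρ ∩ τ) with |x − x̃| + |x̃ − ỹ| + |ỹ − y| ≤ K·|x − y|. -/

import Mathlib

/-- The simplicial (relative) interior of the simplex spanned by a finite set `s`
of affinely independent points: combinations with all weights strictly positive. -/
def finsetInterior {E : Type*} [AddCommGroup E] [Module ℝ E] (s : Finset E) : Set E :=
  {x | ∃ w : E → ℝ, (∀ u ∈ s, 0 < w u) ∧ (∑ u ∈ s, w u) = 1 ∧ (∑ u ∈ s, w u • u) = x}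

section Aux

open Finset

variable {E : Type*} [NormedAddCommGroup E] [NormedSpace ℝ E] [FiniteDimensional ℝ E]

/-- Auxiliary linear map sending coefficients to the corresponding linear combination. -/
noncomputable def comboMap {ι : Type*} [Fintype ι] (g : ι → E) : (ι → ℝ) →ₗ[ℝ] E where
  toFun := fun μ => ∑ i, μ i • g i
  map_add' := by intro a b; simp [add_smul, Finset.sum_add_distrib]
  map_smul' := by intro c a; simp [Finset.smul_sum, smul_smul]

/-- A finitely generated convex cone is closed. -/
theorem isClosed_coneSet {ι : Type*} [Fintype ι] [DecidableEq ι] (g : ι → E) (s : Finset ι) :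
    IsClosed {x : E | ∃ μ : ι → ℝ, (∀ i ∈ s, 0 ≤ μ i) ∧ ∑ i ∈ s, μ i • g i = x} := by
  classical
  induction s using Finset.strongInduction with
  | _ s ih =>
  by_cases hli : LinearIndependent ℝ (fun i : s => g ↑i)
  · have hset : {x : E | ∃ μ : ι → ℝ, (∀ i ∈ s, 0 ≤ μ i) ∧ ∑ i ∈ s, μ i • g i = x}
        = (comboMap (fun i : s => g ↑i)) '' {μ | ∀ i, 0 ≤ μ i} := by
      ext x
      constructor
      · rintro ⟨μ, hμ, rfl⟩
        refine ⟨fun i => μ ↑i, fun i => hμ ↑i i.2, ?_⟩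
        show ∑ i : s, μ ↑i • g ↑i = _
        rw [Finset.sum_coe_sort s (fun i => μ i • g i)]
      · rintro ⟨ν, hν, rfl⟩
        refine ⟨fun i => if h : i ∈ s then ν ⟨i, h⟩ else 0, fun i hi => by simp [hi, hν ⟨i, hi⟩], ?_⟩
        show _ = ∑ i : s, ν i • g ↑i
        rw [← Finset.sum_attach s (fun i => (if h : i ∈ s then ν ⟨i, h⟩ else 0) • g i),
          Finset.sum_coe_sort_eq_attach]
        exact Finset.sum_congr rfl fun i _ => by rw [dif_pos i.2]
    rw [hset]
    have hker : LinearMap.ker (comboMap (fun i : s => g ↑i)) = ⊥ := by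
      rw [LinearMap.ker_eq_bot']
      intro m hm
      exact funext (Fintype.linearIndependent_iff.mp hli m hm)
    have horth : IsClosed {μ : ↥s → ℝ | ∀ i, 0 ≤ μ i} := by
      have : {μ : ↥s → ℝ | ∀ i, 0 ≤ μ i} = ⋂ i, {μ | 0 ≤ μ i} := by
        ext; simp [Set.mem_iInter]
      rw [this]
      exact isClosed_iInter fun i => isClosed_le continuous_const (continuous_apply i)
    exact (LinearMap.isClosedEmbedding_of_injective hker).isClosedMap _ horth
  · obtain ⟨c₀, hc₀, i₀, hi₀⟩ := Fintype.not_linearIndependent_iff.mp hli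
    have hd : ∃ c : ↥s → ℝ, (∑ i, c i • g ↑i = 0) ∧ ∃ i, 0 < c i := by
      rcases hi₀.lt_or_gt with h | h
      · refine ⟨-c₀, ?_, i₀, by simpa using h⟩
        have hneg : ∑ i : ↥s, (-c₀) i • g ↑i = -∑ i : ↥s, c₀ i • g ↑i := by
          simp [neg_smul]
        rw [hneg, hc₀, neg_zero]
      · exact ⟨c₀, hc₀, i₀, h⟩
    obtain ⟨c, hc, hpos⟩ := hd
    have hset : {x : E | ∃ μ : ι → ℝ, (∀ i ∈ s, 0 ≤ μ i) ∧ ∑ i ∈ s, μ i • g i = x}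
        = ⋃ i ∈ {i : s | 0 < c i},
            {x : E | ∃ μ : ι → ℝ, (∀ j ∈ s.erase ↑i, 0 ≤ μ j) ∧ ∑ j ∈ s.erase ↑i, μ j • g j = x} := by
      ext x
      constructor
      · rintro ⟨μ, hμ, rfl⟩
        set Pf : Finset s := univ.filter fun i => 0 < c i with hPfdef
        have hPf : Pf.Nonempty := by
          obtain ⟨i, hi⟩ := hpos
          exact ⟨i, by simp [hPfdef, hi]⟩
        obtain ⟨im, himPf, hmin⟩ := Finset.exists_min_image Pf (fun i => μ ↑i / c i) hPf
        have hcim : 0 < c im := (Finset.mem_filter.mp himPf).2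
        set t := μ ↑im / c im with ht
        have ht0 : 0 ≤ t := div_nonneg (hμ _ im.2) hcim.le
        set cE : ι → ℝ := fun i => if h : i ∈ s then c ⟨i, h⟩ else 0 with hcE
        set μ' : ι → ℝ := fun i => μ i - t * cE i with hμ'
        have hsumcE : ∑ j ∈ s, cE j • g j = 0 := by
          rw [← Finset.sum_attach s (fun j => cE j • g j)]
          rw [← hc]
          rw [← Finset.sum_coe_sort_eq_attach]
          exact Finset.sum_congr rfl fun i _ => by simp [hcE, i.2]
        have hμ'nonneg : ∀ j ∈ s, 0 ≤ μ' j := by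
          intro j hj
          have hcEj : cE j = c ⟨j, hj⟩ := by simp [hcE, hj]
          rcases le_or_gt (c ⟨j, hj⟩) 0 with h | h
          · have : t * cE j ≤ 0 := mul_nonpos_of_nonneg_of_nonpos ht0 (hcEj ▸ h)
            have := hμ j hj
            simp only [hμ']
            linarith
          · have hjPf : (⟨j, hj⟩ : s) ∈ Pf := by simp [hPfdef, h]
            have := hmin _ hjPf
            have : t * c ⟨j, hj⟩ ≤ μ j := by
              rw [← le_div_iff₀ h]; exact this
            simp only [hμ', hcEj]
            linarith
        have hμ'im : μ' ↑im = 0 := by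
          have hcEim : cE ↑im = c im := by simp [hcE, im.2]
          simp only [hμ', hcEim, ht]
          field_simp
          simp
        refine Set.mem_biUnion (show im ∈ {i : s | 0 < c i} from hcim) ?_
        refine ⟨μ', fun j hj => hμ'nonneg j (Finset.mem_of_mem_erase hj), ?_⟩
        have hsum : ∑ j ∈ s, μ' j • g j = ∑ j ∈ s, μ j • g j := by
          have : ∀ j ∈ s, μ' j • g j = μ j • g j - (t * cE j) • g j := by
            intro j _; simp [hμ', sub_smul]
          rw [Finset.sum_congr rfl this, Finset.sum_sub_distrib]
          have : ∑ j ∈ s, (t * cE j) • g j = t • ∑ j ∈ s, cE j • g j := by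
            rw [Finset.smul_sum]; exact Finset.sum_congr rfl fun j _ => by rw [smul_smul]
          rw [this, hsumcE, smul_zero, sub_zero]
        have hsplit := Finset.sum_erase_add s (fun j => μ' j • g j) im.2
        simp only [hμ'im, zero_smul, add_zero] at hsplit
        rw [hsplit, hsum]
      · intro hx
        simp only [Set.mem_iUnion, Set.mem_setOf_eq] at hx
        obtain ⟨i, hci, μ, hμ, rfl⟩ := hx
        refine ⟨Function.update μ ↑i 0, ?_, ?_⟩
        · intro j hj
          rcases eq_or_ne j ↑i with rfl | h
          · simp
          · rw [Function.update_of_ne h]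
            exact hμ j (Finset.mem_erase.mpr ⟨h, hj⟩)
        · rw [← Finset.sum_erase_add s _ i.2, Function.update_self, zero_smul, add_zero]
          exact Finset.sum_congr rfl fun j hj => by
            rw [Function.update_of_ne (Finset.mem_erase.mp hj).1]
    rw [hset]
    exact Set.Finite.isClosed_biUnion (Set.toFinite _)
      (fun i _ => ih _ (Finset.erase_ssubset i.2))

/-- Separation of the convex hull of the `f j` from the cone generated by the `g i`. -/
theorem exists_sep {ι κ : Type*} [Fintype ι] [Fintype κ] (g : ι → E) (f : κ → E)
    (hdisj : ∀ (lam : κ → ℝ) (mu : ι → ℝ), (∀ j, 0 ≤ lam j) → ∑ j, lam j = 1 →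
      (∀ i, 0 ≤ mu i) → ∑ j, lam j • f j ≠ ∑ i, mu i • g i) :
    ∃ ψ : E →L[ℝ] ℝ, (∀ j, 1 ≤ ψ (f j)) ∧ ∀ i, ψ (g i) ≤ 0 := by
  classical
  set C : Set E := {x : E | ∃ μ : ι → ℝ, (∀ i ∈ (univ : Finset ι), 0 ≤ μ i) ∧
    ∑ i ∈ (univ : Finset ι), μ i • g i = x} with hCdef
  have hCclosed : IsClosed C := isClosed_coneSet g univ
  have hCconvex : Convex ℝ C := by
    rintro x ⟨μ, hμ, rfl⟩ y ⟨ν, hν, rfl⟩ a b ha hb hab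
    refine ⟨fun i => a * μ i + b * ν i,
      fun i _ => add_nonneg (mul_nonneg ha (hμ i (mem_univ i))) (mul_nonneg hb (hν i (mem_univ i))), ?_⟩
    simp only [add_smul, mul_smul, Finset.sum_add_distrib, Finset.smul_sum]
  set A : Set E := (comboMap f) '' stdSimplex ℝ κ with hAdef
  have hAconv : Convex ℝ A := (convex_stdSimplex ℝ κ).linear_image (comboMap f)
  have hAcomp : IsCompact A := (isCompact_stdSimplex ℝ κ).image
    (continuous_finset_sum _ fun j _ => (continuous_apply j).smul continuous_const)
  have hdis : Disjoint A C := by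
    rw [Set.disjoint_left]
    rintro x ⟨lam, hlam, rfl⟩ ⟨μ, hμ, hx⟩
    exact hdisj lam μ hlam.1 hlam.2 (fun i => hμ i (mem_univ i)) hx.symm
  obtain ⟨ψ₀, u, v, h1, huv, h2⟩ :=
    geometric_hahn_banach_compact_closed hAconv hAcomp hCconvex hCclosed hdis
  have h0C : (0 : E) ∈ C := ⟨0, by simp, by simp⟩
  have hv0 : v < 0 := by simpa using h2 0 h0C
  have hu0 : u < 0 := huv.trans hv0
  have hscale : ∀ x ∈ C, ∀ t : ℝ, 0 ≤ t → t • x ∈ C := by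
    rintro x ⟨μ, hμ, rfl⟩ t ht
    exact ⟨fun i => t * μ i, fun i hi => mul_nonneg ht (hμ i hi),
      by simp [Finset.smul_sum, mul_smul]⟩
  have hψC : ∀ x ∈ C, 0 ≤ ψ₀ x := by
    intro x hx
    by_contra hneg
    push_neg at hneg
    have htpos : 0 < 2 * v / ψ₀ x := div_pos_of_neg_of_neg (by linarith) hneg
    have := h2 _ (hscale x hx _ htpos.le)
    rw [map_smul, smul_eq_mul, div_mul_cancel₀ _ hneg.ne] at this
    linarith
  refine ⟨u⁻¹ • ψ₀, fun j => ?_, fun i => ?_⟩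
  · have hj : f j ∈ A := by
      refine ⟨fun k => if k = j then 1 else 0, ⟨fun k => by dsimp only; split <;> norm_num, by simp⟩, ?_⟩
      show ∑ k, (if k = j then (1:ℝ) else 0) • f k = f j
      simp [ite_smul]
    have hlt := h1 _ hj
    rw [ContinuousLinearMap.smul_apply, smul_eq_mul]
    calc (1:ℝ) = u⁻¹ * u := (inv_mul_cancel₀ hu0.ne).symm
      _ ≤ u⁻¹ * ψ₀ (f j) := mul_le_mul_of_nonpos_left hlt.le (inv_nonpos.mpr hu0.le)
  · have hi : g i ∈ C := by
      refine ⟨fun k => if k = i then 1 else 0, fun k _ => by dsimp only; split <;> norm_num, ?_⟩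
      show ∑ k, (if k = i then (1:ℝ) else 0) • g k = g i
      simp [ite_smul]
    rw [ContinuousLinearMap.smul_apply, smul_eq_mul]
    exact mul_nonpos_of_nonpos_of_nonneg (inv_nonpos.mpr hu0.le) (hψC _ hi)

set_option maxHeartbeats 400000 in
theorem exists_psi (ρ τ σ : Finset E) (p : E)
    (hindep : AffineIndependent ℝ ((↑) : ρ → E))
    (hσρ : σ ⊆ ρ) (hστ : σ ⊆ τ)
    (hcap : ∀ u ∈ ρ, u ∈ τ → u ∈ σ)
    (hconv : convexHull ℝ (ρ : Set E) ∩ convexHull ℝ (τ : Set E) ⊆ convexHull ℝ (σ : Set E))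
    (hσne : σ.Nonempty)
    (hp : p = (σ.card : ℝ)⁻¹ • ∑ u ∈ σ, u) :
    ∃ ψ : E →L[ℝ] ℝ, (∀ u ∈ ρ, u ∉ τ → 1 ≤ ψ (u - p)) ∧ (∀ u ∈ τ, ψ (u - p) ≤ 0) ∧
      (∀ u ∈ σ, 0 ≤ ψ (u - p)) := by
  classical
  set F : Finset E := ρ \ τ with hF
  have hn0 : 0 < (σ.card : ℝ) := by exact_mod_cast Finset.card_pos.mpr hσne
  have hn1 : (1:ℝ) ≤ (σ.card : ℝ) := by exact_mod_cast Finset.card_pos.mpr hσne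
  have hsub : ∀ (t : Finset E) (c : E → ℝ),
      ∑ v ∈ t, c v • (v - p) = (∑ v ∈ t, c v • v) - (∑ v ∈ t, c v) • p := by
    intro t c
    rw [Finset.sum_smul, ← Finset.sum_sub_distrib]
    exact Finset.sum_congr rfl fun v _ => smul_sub _ _ _
  have hsub' : ∀ (t : Finset E) (c : E → ℝ),
      ∑ v ∈ t, c v • (p - v) = (∑ v ∈ t, c v) • p - (∑ v ∈ t, c v • v) := by
    intro t c
    rw [Finset.sum_smul, ← Finset.sum_sub_distrib]
    exact Finset.sum_congr rfl fun v _ => smul_sub _ _ _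
  have hdisj : ∀ (lam : ↥F → ℝ) (mu : (↥τ ⊕ ↥σ) → ℝ), (∀ j, 0 ≤ lam j) → ∑ j, lam j = 1 →
      (∀ i, 0 ≤ mu i) →
      ∑ j, lam j • ((↑j : E) - p) ≠
        ∑ i, mu i • (Sum.elim (fun u : ↥τ => (↑u : E) - p) (fun u : ↥σ => p - ↑u)) i := by
    intro lam mu hlam hlam1 hmu heq
    set lamE : E → ℝ := fun v => if h : v ∈ F then lam ⟨v, h⟩ else 0 with hlamE
    set aE : E → ℝ := fun v => if h : v ∈ τ then mu (Sum.inl ⟨v, h⟩) else 0 with haE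
    set bE : E → ℝ := fun v => if h : v ∈ σ then mu (Sum.inr ⟨v, h⟩) else 0 with hbE
    have hlamE0 : ∀ v, 0 ≤ lamE v := fun v => by
      rw [hlamE]; dsimp only; split; exacts [hlam _, le_rfl]
    have haE0 : ∀ v, 0 ≤ aE v := fun v => by
      rw [haE]; dsimp only; split; exacts [hmu _, le_rfl]
    have hbE0 : ∀ v, 0 ≤ bE v := fun v => by
      rw [hbE]; dsimp only; split; exacts [hmu _, le_rfl]
    have hl1 : ∑ v ∈ F, lamE v = 1 := by
      have hcongr : ∀ x ∈ F.attach, lamE ↑x = lam x := fun x _ => by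
        simp only [hlamE]; rw [dif_pos x.2]
      rw [← Finset.sum_attach F lamE, Finset.sum_congr rfl hcongr,
        ← Finset.sum_coe_sort_eq_attach, hlam1]
    have hzF : ∑ j, lam j • ((↑j : E) - p) = ∑ v ∈ F, lamE v • (v - p) := by
      have hcongr : ∀ x ∈ F.attach, lamE ↑x • ((↑x : E) - p) = lam x • ((↑x : E) - p) :=
        fun x _ => by simp only [hlamE]; rw [dif_pos x.2]
      rw [← Finset.sum_attach F (fun v => lamE v • (v - p)), Finset.sum_congr rfl hcongr,
        ← Finset.sum_coe_sort_eq_attach]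
    have hzτ : ∑ i : ↥τ, mu (Sum.inl i) • ((↑i : E) - p) = ∑ v ∈ τ, aE v • (v - p) := by
      have hcongr : ∀ x ∈ τ.attach, aE ↑x • ((↑x : E) - p) = mu (Sum.inl x) • ((↑x : E) - p) :=
        fun x _ => by simp only [haE]; rw [dif_pos x.2]
      rw [← Finset.sum_attach τ (fun v => aE v • (v - p)), Finset.sum_congr rfl hcongr,
        ← Finset.sum_coe_sort_eq_attach]
    have hzσ : ∑ i : ↥σ, mu (Sum.inr i) • (p - (↑i : E)) = ∑ v ∈ σ, bE v • (p - v) := by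
      have hcongr : ∀ x ∈ σ.attach, bE ↑x • (p - (↑x : E)) = mu (Sum.inr x) • (p - (↑x : E)) :=
        fun x _ => by simp only [hbE]; rw [dif_pos x.2]
      rw [← Finset.sum_attach σ (fun v => bE v • (p - v)), Finset.sum_congr rfl hcongr,
        ← Finset.sum_coe_sort_eq_attach]
    have hz : ∑ v ∈ F, lamE v • (v - p) = ∑ v ∈ τ, aE v • (v - p) + ∑ v ∈ σ, bE v • (p - v) := by
      rw [← hzF, heq, Fintype.sum_sum_type]
      simp only [Sum.elim_inl, Sum.elim_inr]
      rw [hzτ, hzσ]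
    set Sa := ∑ v ∈ τ, aE v with hSa
    set Sb := ∑ v ∈ σ, bE v with hSb
    have hSa0 : 0 ≤ Sa := Finset.sum_nonneg fun v _ => haE0 v
    have hSb0 : 0 ≤ Sb := Finset.sum_nonneg fun v _ => hbE0 v
    set n : ℝ := (σ.card : ℝ) with hn
    have hden : 0 < 1 + n * (2 * (Sa + Sb)) := by nlinarith
    set s : ℝ := (1 + n * (2 * (Sa + Sb)))⁻¹ with hs
    have hs0 : 0 < s := inv_pos.mpr hden
    have hs1 : s ≤ 1 := inv_le_one_of_one_le₀ (by nlinarith)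
    have hsmul : s * (1 + n * (2 * (Sa + Sb))) = 1 := inv_mul_cancel₀ hden.ne'
    have hcv : ∀ v ∈ σ, 0 ≤ s * aE v - s * bE v + (1 - s * Sa + s * Sb) * n⁻¹ := by
      intro v hv
      have h1 : bE v ≤ Sb := Finset.single_le_sum (fun u _ => hbE0 u) hv
      have h2 : 0 ≤ aE v := haE0 v
      have h3 : 0 ≤ bE v := hbE0 v
      have key : 0 ≤ (s * aE v - s * bE v) * n + (1 - s * Sa + s * Sb) := by
        nlinarith [mul_nonneg hs0.le hSa0, mul_nonneg hs0.le hSb0,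
          mul_nonneg (mul_nonneg hs0.le hSa0) (by linarith : (0:ℝ) ≤ n - 1),
          mul_nonneg (mul_nonneg hs0.le hSb0) (by linarith : (0:ℝ) ≤ n - 1),
          mul_le_mul_of_nonneg_left h1 (mul_nonneg hs0.le (by linarith : (0:ℝ) ≤ n)),
          mul_nonneg (mul_nonneg hs0.le h2) hn0.le,
          mul_nonneg (mul_nonneg hs0.le hn0.le) hSb0, hsmul]
      have key2 : 0 ≤ ((s * aE v - s * bE v) * n + (1 - s * Sa + s * Sb)) * n⁻¹ :=
        mul_nonneg key (inv_nonneg.mpr hn0.le)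
      rwa [add_mul, mul_assoc, mul_inv_cancel₀ hn0.ne', mul_one] at key2
    set X : E := ∑ v ∈ F, lamE v • v with hX
    set A1 : E := ∑ v ∈ τ, aE v • v with hA1
    set A1σ : E := ∑ v ∈ σ, aE v • v with hA1σ
    set B1 : E := ∑ v ∈ σ, bE v • v with hB1
    have hXA : X - (1:ℝ) • p = (A1 - Sa • p) + (Sb • p - B1) := by
      have := hz
      rw [hsub F lamE, hsub τ aE, hsub' σ bE, hl1] at this
      exact this
    set q : E := p + s • (X - (1:ℝ) • p) with hq
    set wρ : E → ℝ := fun v => if v ∈ σ then (1 - s) * n⁻¹ else s * lamE v with hwρ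
    have hFρσ : ρ \ σ = F := by
      ext v
      simp only [hF, Finset.mem_sdiff]
      constructor
      · rintro ⟨h1, h2⟩
        exact ⟨h1, fun h3 => h2 (hcap v h1 h3)⟩
      · rintro ⟨h1, h2⟩
        exact ⟨h1, fun h3 => h2 (hστ h3)⟩
    have hwρ0 : ∀ v ∈ ρ, 0 ≤ wρ v := by
      intro v _
      rw [hwρ]; dsimp only; split
      · exact mul_nonneg (by linarith) (inv_nonneg.mpr hn0.le)
      · exact mul_nonneg hs0.le (hlamE0 v)
    have hwρ1 : ∑ v ∈ ρ, wρ v = 1 := by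
      rw [← Finset.sum_sdiff hσρ]
      have e1 : ∑ v ∈ ρ \ σ, wρ v = s * (∑ v ∈ F, lamE v) := by
        rw [hFρσ, Finset.mul_sum]
        refine Finset.sum_congr rfl fun v hv => ?_
        have hvσ : v ∉ σ := (Finset.mem_sdiff.mp (hFρσ ▸ hv)).2
        rw [hwρ]; dsimp only; rw [if_neg hvσ]
      have e2 : ∑ v ∈ σ, wρ v = (1 - s) := by
        have : ∀ v ∈ σ, wρ v = (1 - s) * n⁻¹ := fun v hv => by
          rw [hwρ]; dsimp only; rw [if_pos hv]
        rw [Finset.sum_congr rfl this, Finset.sum_const, nsmul_eq_mul, ← hn,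
          mul_comm n, mul_assoc, inv_mul_cancel₀ hn0.ne', mul_one]
      rw [e1, e2, hl1]
      ring
    have hwρv : ∑ v ∈ ρ, wρ v • v = q := by
      rw [← Finset.sum_sdiff hσρ]
      have e1 : ∑ v ∈ ρ \ σ, wρ v • v = s • X := by
        rw [hFρσ, hX, Finset.smul_sum]
        refine Finset.sum_congr rfl fun v hv => ?_
        have hvσ : v ∉ σ := (Finset.mem_sdiff.mp (hFρσ ▸ hv)).2
        rw [hwρ]; dsimp only; rw [if_neg hvσ, mul_smul]
      have e2 : ∑ v ∈ σ, wρ v • v = (1 - s) • p := by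
        have : ∀ v ∈ σ, wρ v • v = ((1 - s) * n⁻¹) • v := fun v hv => by
          rw [hwρ]; dsimp only; rw [if_pos hv]
        rw [Finset.sum_congr rfl this, ← Finset.smul_sum, mul_smul, hp]
      rw [e1, e2, hq]
      module
    have hqρ : q ∈ convexHull ℝ (ρ : Set E) := by
      have hmem := ρ.centerMass_id_mem_convexHull (w := wρ) hwρ0 (by rw [hwρ1]; exact one_pos)
      have hcm : ρ.centerMass wρ id = q := by
        rw [Finset.centerMass_eq_of_sum_1 _ _ hwρ1]
        simpa [id] using hwρv
      rwa [hcm] at hmem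
    set wτ : E → ℝ := fun v =>
      if v ∈ σ then s * aE v - s * bE v + (1 - s * Sa + s * Sb) * n⁻¹ else s * aE v with hwτ
    have hwτ0 : ∀ v ∈ τ, 0 ≤ wτ v := by
      intro v hv
      rw [hwτ]; dsimp only; split
      · next hvσ => exact hcv v hvσ
      · exact mul_nonneg hs0.le (haE0 v)
    have hsplitA : ∑ v ∈ τ \ σ, aE v + ∑ v ∈ σ, aE v = Sa := Finset.sum_sdiff hστ
    have hwτ1 : ∑ v ∈ τ, wτ v = 1 := by
      rw [← Finset.sum_sdiff hστ]
      have e1 : ∑ v ∈ τ \ σ, wτ v = s * (∑ v ∈ τ \ σ, aE v) := by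
        rw [Finset.mul_sum]
        refine Finset.sum_congr rfl fun v hv => ?_
        have hvσ : v ∉ σ := (Finset.mem_sdiff.mp hv).2
        rw [hwτ]; dsimp only; rw [if_neg hvσ]
      have e2 : ∑ v ∈ σ, wτ v
          = s * (∑ v ∈ σ, aE v) - s * Sb + (1 - s * Sa + s * Sb) := by
        have hco : ∀ v ∈ σ, wτ v = s * aE v - s * bE v + (1 - s * Sa + s * Sb) * n⁻¹ :=
          fun v hv => by rw [hwτ]; dsimp only; rw [if_pos hv]
        rw [Finset.sum_congr rfl hco]
        rw [Finset.sum_add_distrib, Finset.sum_sub_distrib, ← Finset.mul_sum, ← Finset.mul_sum,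
          ← hSb, Finset.sum_const, nsmul_eq_mul, ← hn,
          mul_comm n, mul_assoc, inv_mul_cancel₀ hn0.ne', mul_one]
      rw [e1, e2]
      have haux : ∑ v ∈ τ \ σ, aE v = Sa - ∑ v ∈ σ, aE v := by linarith [hsplitA]
      rw [haux]
      ring
    have hwτv : ∑ v ∈ τ, wτ v • v = q := by
      rw [← Finset.sum_sdiff hστ]
      have e1 : ∑ v ∈ τ \ σ, wτ v • v = s • A1 - s • A1σ := by
        have h' : ∑ v ∈ τ \ σ, aE v • v + ∑ v ∈ σ, aE v • v = A1 := Finset.sum_sdiff hστ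
        have e1' : ∑ v ∈ τ \ σ, wτ v • v = s • ∑ v ∈ τ \ σ, aE v • v := by
          rw [Finset.smul_sum]
          refine Finset.sum_congr rfl fun v hv => ?_
          have hvσ : v ∉ σ := (Finset.mem_sdiff.mp hv).2
          rw [hwτ]; dsimp only; rw [if_neg hvσ, mul_smul]
        rw [e1', ← hA1σ] at *
        rw [show ∑ v ∈ τ \ σ, aE v • v = A1 - A1σ by
          rw [← h', hA1σ]; abel]
        module
      have e2 : ∑ v ∈ σ, wτ v • v = s • A1σ - s • B1 + (1 - s * Sa + s * Sb) • p := by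
        have hco : ∀ v ∈ σ, wτ v • v
            = s • (aE v • v) - s • (bE v • v) + ((1 - s * Sa + s * Sb) * n⁻¹) • v := by
          intro v hv
          rw [hwτ]; dsimp only; rw [if_pos hv, add_smul, sub_smul, mul_smul, mul_smul]
        rw [Finset.sum_congr rfl hco, Finset.sum_add_distrib, Finset.sum_sub_distrib,
          ← Finset.smul_sum, ← Finset.smul_sum, ← Finset.smul_sum, ← hA1σ, ← hB1,
          mul_smul, hp]
      rw [e1, e2, hq, show X = (A1 - Sa • p) + (Sb • p - B1) + (1:ℝ) • p by
        rw [← hXA]; abel]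
      module
    have hqτ : q ∈ convexHull ℝ (τ : Set E) := by
      have hmem := τ.centerMass_id_mem_convexHull (w := wτ) hwτ0 (by rw [hwτ1]; exact one_pos)
      have hcm : τ.centerMass wτ id = q := by
        rw [Finset.centerMass_eq_of_sum_1 _ _ hwτ1]
        simpa [id] using hwτv
      rwa [hcm] at hmem
    have hqσ : q ∈ convexHull ℝ (σ : Set E) := hconv ⟨hqρ, hqτ⟩
    rw [Finset.convexHull_eq] at hqσ
    obtain ⟨e, he0, he1, hecm⟩ := hqσ
    have heq2 : ∑ v ∈ σ, e v • v = q := by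
      rw [Finset.centerMass_eq_of_sum_1 _ _ he1] at hecm
      simpa [id] using hecm
    set dd : E → ℝ := fun v => wρ v - (if v ∈ σ then e v else 0) with hdd
    have hd0 : ∑ v ∈ ρ, dd v = 0 := by
      rw [hdd]
      rw [Finset.sum_sub_distrib, hwρ1, Finset.sum_ite_mem,
        Finset.inter_eq_right.mpr hσρ, he1, sub_self]
    have hdv : ∑ v ∈ ρ, dd v • v = 0 := by
      have hco : ∀ v ∈ ρ, dd v • v = wρ v • v - (if v ∈ σ then e v • v else 0) := by
        intro v _
        rw [hdd]; dsimp only; rw [sub_smul]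
        congr 1
        split <;> simp
      rw [Finset.sum_congr rfl hco, Finset.sum_sub_distrib, hwρv, Finset.sum_ite_mem,
        Finset.inter_eq_right.mpr hσρ, heq2, sub_self]
    have hall := affineIndependent_iff.mp hindep ρ.attach (fun j => dd ↑j)
      (by rw [Finset.sum_attach ρ dd]; exact hd0)
      (by rw [Finset.sum_attach ρ (fun v => dd v • v)]; exact hdv)
    have hlt : ∑ v ∈ F, (0:ℝ) < ∑ v ∈ F, lamE v := by
      rw [hl1, Finset.sum_const, smul_zero]
      norm_num
    obtain ⟨v₀, hv₀F, hv₀⟩ := Finset.exists_lt_of_sum_lt hlt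
    have hv₀mem := Finset.mem_sdiff.mp (hF ▸ hv₀F)
    have hv₀ρ : v₀ ∈ ρ := hv₀mem.1
    have hv₀σ : v₀ ∉ σ := fun h => hv₀mem.2 (hστ h)
    have hddv₀ : dd v₀ = s * lamE v₀ := by
      rw [hdd, hwρ]; dsimp only; rw [if_neg hv₀σ, if_neg hv₀σ, sub_zero]
    have hzero := hall ⟨v₀, hv₀ρ⟩ (Finset.mem_attach _ _)
    dsimp only at hzero
    rw [hddv₀] at hzero
    nlinarith [mul_pos hs0 hv₀]
  obtain ⟨ψ, hψ1, hψ2⟩ := exists_sep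
    (Sum.elim (fun u : ↥τ => (↑u : E) - p) (fun u : ↥σ => p - ↑u))
    (fun j : ↥F => (↑j : E) - p) hdisj
  refine ⟨ψ, fun u hu hut => hψ1 ⟨u, Finset.mem_sdiff.mpr ⟨hu, hut⟩⟩,
    fun u hu => hψ2 (Sum.inl ⟨u, hu⟩), fun u hu => ?_⟩
  have h1 := hψ2 (Sum.inr ⟨u, hu⟩)
  simp only [Sum.elim_inr] at h1
  have h2 : ψ (u - p) = -ψ (p - u) := by rw [← map_neg, neg_sub]
  linarith

/-- One-sided estimate: a point of `Int ρ` is close to a point of `Int σ`,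
quantitatively in terms of its distance to any point of `Int τ`. -/
theorem one_sided (ρ τ σ : Finset E)
    (hindep : AffineIndependent ℝ ((↑) : ρ → E))
    (hσρ : σ ⊆ ρ) (hστ : σ ⊆ τ)
    (hcap : ∀ u ∈ ρ, u ∈ τ → u ∈ σ)
    (hconv : convexHull ℝ (ρ : Set E) ∩ convexHull ℝ (τ : Set E) ⊆ convexHull ℝ (σ : Set E))
    (hσne : σ.Nonempty) :
    ∃ L : ℝ, 0 ≤ L ∧ ∀ x ∈ finsetInterior ρ, ∀ y ∈ finsetInterior τ,
      ∃ x' ∈ finsetInterior σ, ‖x - x'‖ ≤ L * ‖x - y‖ := by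
  classical
  obtain ⟨ψ, hψ1, hψ2, hψ3⟩ := exists_psi ρ τ σ _ hindep hσρ hστ hcap hconv hσne rfl
  set p : E := (σ.card : ℝ)⁻¹ • ∑ u ∈ σ, u with hp
  set R : ℝ := ∑ u ∈ ρ, ‖u‖ with hR
  have hR0 : 0 ≤ R := Finset.sum_nonneg fun u _ => norm_nonneg u
  have hRu : ∀ u ∈ ρ, ‖u‖ ≤ R := fun u hu =>
    Finset.single_le_sum (fun v _ => norm_nonneg v) hu
  refine ⟨2 * R * ‖ψ‖, by positivity, ?_⟩
  rintro x ⟨w, hw, hw1, hwx⟩ y ⟨vv, hv, hv1, hvy⟩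
  set a : ℝ := ∑ u ∈ σ, w u with ha
  set ε : ℝ := ∑ u ∈ ρ \ σ, w u with hε
  have ha0 : 0 < a := Finset.sum_pos (fun u hu => hw u (hσρ hu)) hσne
  have hε0 : 0 ≤ ε := Finset.sum_nonneg fun u hu => (hw u (Finset.mem_sdiff.mp hu).1).le
  have hεa : ε + a = 1 := by rw [hε, ha, Finset.sum_sdiff hσρ, hw1]
  set x' : E := a⁻¹ • ∑ u ∈ σ, w u • u with hx'
  have hx'mem : x' ∈ finsetInterior σ := by
    refine ⟨fun u => a⁻¹ * w u, fun u hu => mul_pos (inv_pos.mpr ha0) (hw u (hσρ hu)), ?_, ?_⟩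
    · rw [← Finset.mul_sum, ← ha, inv_mul_cancel₀ ha0.ne']
    · rw [hx', Finset.smul_sum]
      exact Finset.sum_congr rfl fun u _ => (mul_smul _ _ _)
  refine ⟨x', hx'mem, ?_⟩
  -- ε ≤ ψ (x - y)
  have hxp : x - p = ∑ u ∈ ρ, w u • (u - p) := by
    have : ∑ u ∈ ρ, w u • (u - p) = (∑ u ∈ ρ, w u • u) - (∑ u ∈ ρ, w u) • p := by
      rw [Finset.sum_smul, ← Finset.sum_sub_distrib]
      exact Finset.sum_congr rfl fun v _ => smul_sub _ _ _
    rw [this, hwx, hw1, one_smul]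
  have hyp : y - p = ∑ u ∈ τ, vv u • (u - p) := by
    have : ∑ u ∈ τ, vv u • (u - p) = (∑ u ∈ τ, vv u • u) - (∑ u ∈ τ, vv u) • p := by
      rw [Finset.sum_smul, ← Finset.sum_sub_distrib]
      exact Finset.sum_congr rfl fun v _ => smul_sub _ _ _
    rw [this, hvy, hv1, one_smul]
  have hψx : ε ≤ ψ (x - p) := by
    rw [hxp, map_sum]
    have hsplit : ∑ u ∈ ρ \ σ, ψ (w u • (u - p)) + ∑ u ∈ σ, ψ (w u • (u - p))
        = ∑ u ∈ ρ, ψ (w u • (u - p)) := Finset.sum_sdiff hσρ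
    rw [← hsplit]
    have h1 : ε ≤ ∑ u ∈ ρ \ σ, ψ (w u • (u - p)) := by
      rw [hε]
      refine Finset.sum_le_sum fun u hu => ?_
      obtain ⟨huρ, huσ⟩ := Finset.mem_sdiff.mp hu
      have huτ : u ∉ τ := fun h => huσ (hcap u huρ h)
      rw [map_smul, smul_eq_mul]
      nlinarith [hψ1 u huρ huτ, (hw u huρ).le]
    have h2 : (0:ℝ) ≤ ∑ u ∈ σ, ψ (w u • (u - p)) := by
      refine Finset.sum_nonneg fun u hu => ?_
      rw [map_smul, smul_eq_mul]
      exact mul_nonneg (hw u (hσρ hu)).le (hψ3 u hu)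
    linarith
  have hψy : ψ (y - p) ≤ 0 := by
    rw [hyp, map_sum]
    refine Finset.sum_nonpos fun u hu => ?_
    rw [map_smul, smul_eq_mul]
    exact mul_nonpos_of_nonneg_of_nonpos (hv u hu).le (hψ2 u hu)
  have hε_le : ε ≤ ψ (x - y) := by
    have : ψ (x - y) = ψ (x - p) - ψ (y - p) := by
      rw [← map_sub, sub_sub_sub_cancel_right]
    linarith [hψx, hψy, this.ge, this.le]
  have hεnorm : ε ≤ ‖ψ‖ * ‖x - y‖ := by
    refine hε_le.trans (le_trans (le_abs_self _) ?_)
    rw [← Real.norm_eq_abs]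
    exact ψ.le_opNorm _
  have hxsum : x = (∑ u ∈ ρ \ σ, w u • u) + a • x' := by
    rw [hx', smul_inv_smul₀ ha0.ne', ← hwx, ← Finset.sum_sdiff hσρ]
  have hxx' : x - x' = (∑ u ∈ ρ \ σ, w u • u) - ε • x' := by
    rw [show ε = 1 - a from by linarith, hxsum]
    module
  have hnorm1 : ‖∑ u ∈ ρ \ σ, w u • u‖ ≤ ε * R := by
    refine (norm_sum_le _ _).trans ?_
    rw [hε, Finset.sum_mul]
    refine Finset.sum_le_sum fun u hu => ?_
    have huρ : u ∈ ρ := (Finset.mem_sdiff.mp hu).1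
    rw [norm_smul, Real.norm_eq_abs, abs_of_nonneg (hw u huρ).le]
    exact mul_le_mul_of_nonneg_left (hRu u huρ) (hw u huρ).le
  have hsx : ‖∑ u ∈ σ, w u • u‖ ≤ a * R := by
    refine (norm_sum_le _ _).trans ?_
    rw [ha, Finset.sum_mul]
    refine Finset.sum_le_sum fun u hu => ?_
    rw [norm_smul, Real.norm_eq_abs, abs_of_nonneg (hw u (hσρ hu)).le]
    exact mul_le_mul_of_nonneg_left (hRu u (hσρ hu)) (hw u (hσρ hu)).le
  have hx'R : ‖x'‖ ≤ R := by
    rw [hx', norm_smul, Real.norm_eq_abs, abs_of_nonneg (inv_nonneg.mpr ha0.le)]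
    calc a⁻¹ * ‖∑ u ∈ σ, w u • u‖ ≤ a⁻¹ * (a * R) :=
          mul_le_mul_of_nonneg_left hsx (inv_nonneg.mpr ha0.le)
      _ = R := by rw [← mul_assoc, inv_mul_cancel₀ ha0.ne', one_mul]
  have hfinal : ‖x - x'‖ ≤ 2 * R * ε := by
    rw [hxx']
    refine (norm_sub_le _ _).trans ?_
    have hsm : ‖ε • x'‖ ≤ ε * R := by
      rw [norm_smul, Real.norm_eq_abs, abs_of_nonneg hε0]
      exact mul_le_mul_of_nonneg_left hx'R hε0
    linarith [hnorm1]
  calc ‖x - x'‖ ≤ 2 * R * ε := hfinal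
    _ ≤ 2 * R * (‖ψ‖ * ‖x - y‖) := by nlinarith [hεnorm, hR0]
    _ = 2 * R * ‖ψ‖ * ‖x - y‖ := by ring

end Aux

open Classical in
/-- for a finite simplicial complex `P` in `ℝ^N` there is `K < ∞` such that
whenever faces `ρ, τ` intersect but neither contains the other, and `x ∈ Int ρ`,
`y ∈ Int τ`, there are `x̃, ỹ ∈ Int (ρ ∩ τ)` with
`|x − x̃| + |x̃ − ỹ| + |ỹ − y| ≤ K·|x − y|`. -/
theorem stmt_19 {N : ℕ}
    (P : Geometry.SimplicialComplex ℝ (EuclideanSpace ℝ (Fin N)))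
    (hfin : P.faces.Finite) :
    ∃ K : ℝ, ∀ ρ ∈ P.faces, ∀ τ ∈ P.faces,
      (ρ ∩ τ).Nonempty → ¬ρ ⊆ τ → ¬τ ⊆ ρ →
      ∀ x ∈ finsetInterior ρ, ∀ y ∈ finsetInterior τ,
        ∃ x' ∈ finsetInterior (ρ ∩ τ), ∃ y' ∈ finsetInterior (ρ ∩ τ),
          ‖x - x'‖ + ‖x' - y'‖ + ‖y' - y‖ ≤ K * ‖x - y‖ := by
  have key : ∀ q : Finset (EuclideanSpace ℝ (Fin N)) × Finset (EuclideanSpace ℝ (Fin N)),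
      ∃ C : ℝ, 0 ≤ C ∧ (q.1 ∈ P.faces → q.2 ∈ P.faces → (q.1 ∩ q.2).Nonempty →
        ¬q.1 ⊆ q.2 → ¬q.2 ⊆ q.1 →
        ∀ x ∈ finsetInterior q.1, ∀ y ∈ finsetInterior q.2,
          ∃ x' ∈ finsetInterior (q.1 ∩ q.2), ∃ y' ∈ finsetInterior (q.1 ∩ q.2),
            ‖x - x'‖ + ‖x' - y'‖ + ‖y' - y‖ ≤ C * ‖x - y‖) := by
    rintro ⟨ρ, τ⟩
    by_cases h : ρ ∈ P.faces ∧ τ ∈ P.faces ∧ (ρ ∩ τ).Nonempty ∧ ¬ρ ⊆ τ ∧ ¬τ ⊆ ρ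
    · obtain ⟨hρ, hτ, hne, h1, h2⟩ := h
      have hσρ : ρ ∩ τ ⊆ ρ := Finset.inter_subset_left
      have hστ : ρ ∩ τ ⊆ τ := Finset.inter_subset_right
      have hconv1 : convexHull ℝ (ρ : Set (EuclideanSpace ℝ (Fin N))) ∩ convexHull ℝ (τ : Set (EuclideanSpace ℝ (Fin N)))
          ⊆ convexHull ℝ ((ρ ∩ τ : Finset (EuclideanSpace ℝ (Fin N))) : Set (EuclideanSpace ℝ (Fin N))) := by
        have := P.inter_subset_convexHull hρ hτ
        simpa using this
      obtain ⟨L1, hL10, H1⟩ := one_sided ρ τ (ρ ∩ τ) (P.indep hρ) hσρ hστ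
        (fun u hu1 hu2 => Finset.mem_inter.mpr ⟨hu1, hu2⟩) hconv1 hne
      obtain ⟨L2, hL20, H2⟩ := one_sided τ ρ (ρ ∩ τ) (P.indep hτ) hστ hσρ
        (fun u hu1 hu2 => Finset.mem_inter.mpr ⟨hu2, hu1⟩)
        (by rw [Set.inter_comm]; exact hconv1) hne
      refine ⟨2 * L1 + 2 * L2 + 1, by positivity, fun _ _ _ _ _ x hx y hy => ?_⟩
      obtain ⟨x', hx', hxe⟩ := H1 x hx y hy
      obtain ⟨y', hy', hye⟩ := H2 y hy x hx
      refine ⟨x', hx', y', hy', ?_⟩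
      have htri : ‖x' - y'‖ ≤ ‖x' - x‖ + ‖x - y‖ + ‖y - y'‖ := by
        have := dist_triangle4 x' x y y'
        simpa [dist_eq_norm] using this
      have e1 : ‖x' - x‖ = ‖x - x'‖ := norm_sub_rev _ _
      have e2 : ‖y - y'‖ = ‖y' - y‖ := norm_sub_rev _ _
      have e3 : ‖y - x‖ = ‖x - y‖ := norm_sub_rev _ _
      have hye' : ‖y' - y‖ ≤ L2 * ‖x - y‖ := by rw [← e2]; rw [e3] at hye; exact hye
      have hn0 : (0:ℝ) ≤ ‖x - y‖ := norm_nonneg _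
      calc ‖x - x'‖ + ‖x' - y'‖ + ‖y' - y‖
          ≤ ‖x - x'‖ + (‖x' - x‖ + ‖x - y‖ + ‖y - y'‖) + ‖y' - y‖ := by linarith [htri]
        _ = 2 * ‖x - x'‖ + ‖x - y‖ + 2 * ‖y' - y‖ := by rw [e1, e2]; ring
        _ ≤ 2 * (L1 * ‖x - y‖) + ‖x - y‖ + 2 * (L2 * ‖x - y‖) := by linarith [hxe, hye']
        _ = (2 * L1 + 2 * L2 + 1) * ‖x - y‖ := by ring
    · refine ⟨0, le_rfl, fun hρ hτ hne h1 h2 => absurd ⟨hρ, hτ, hne, h1, h2⟩ h⟩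
  choose C hC0 hC using key
  refine ⟨∑ q ∈ hfin.toFinset ×ˢ hfin.toFinset, C q, fun ρ hρ τ hτ hne h1 h2 x hx y hy => ?_⟩
  obtain ⟨x', hx', y', hy', hle⟩ := hC (ρ, τ) hρ hτ hne h1 h2 x hx y hy
  refine ⟨x', hx', y', hy', hle.trans ?_⟩
  have hmem : (ρ, τ) ∈ hfin.toFinset ×ˢ hfin.toFinset := by
    rw [Finset.mem_product]
    exact ⟨hfin.mem_toFinset.mpr hρ, hfin.mem_toFinset.mpr hτ⟩
  exact mul_le_mul_of_nonneg_right
    (Finset.single_le_sum (fun q _ => hC0 q) hmem) (norm_nonneg _)
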